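/- arXiv:2506.06647 — 3 statements merged into one kernel-verified Lean document; each statement's English description precedes it below -/
import Mathlib

section
/- Under assumption (A), for every c > 0 the infimum γ(c) = inf_{u ∈ A} J(c,u) satisfies γ(c) < (1/c)[(|b-a|²/2 + M)(e^c - 1) - m e^{-c}], where a is a global minimizer of W, m = -W(a), and M = max_{x∈[0,1]} W(a + x(b-a)). -/
open Real Filter MeasureTheory Set Metric Bornology
open scoped RealInnerProductSpace NNReal

noncomputable section

abbrev Euc (n : ℕ) := EuclideanSpace ℝ (Fin n)

/-- The weighted traveling-wave energy functional `J(c,u) = ∫ e^{cx}(½|u'|² + W(u))`. -/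
def J {n : ℕ} (W : Euc n → ℝ) (c : ℝ) (u : ℝ → Euc n) : ℝ :=
  ∫ x : ℝ, Real.exp (c * x) * (‖deriv u x‖ ^ 2 / 2 + W (u x))

/-- The admissible set `A`: locally-`H¹` functions with `u(+∞) = b`, `u(0) ∈ Γ = ∂{W<0}`,
and `W(u) ≥ 0` on `[0,∞)`. -/
def Adm {n : ℕ} (W : Euc n → ℝ) (b : Euc n) : Set (ℝ → Euc n) :=
  {u | (∃ g : ℝ → Euc n, AEStronglyMeasurable g volume ∧
          LocallyIntegrable (fun t => ‖g t‖ ^ 2) volume ∧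
          ∀ x y : ℝ, u y - u x = ∫ t in x..y, g t) ∧
    Tendsto u atTop (nhds b) ∧
    u 0 ∈ frontier {v : Euc n | W v < 0} ∧
    ∀ x ≥ (0 : ℝ), 0 ≤ W (u x)}

/-- The minimum-energy function `γ(c) = inf_A J(c,·)`. -/
def gam {n : ℕ} (W : Euc n → ℝ) (b : Euc n) (c : ℝ) : ℝ :=
  sInf (J W c '' Adm W b)

lemma hasDerivAt_expc {c : ℝ} (hc : c ≠ 0) (x : ℝ) :
    HasDerivAt (fun y => Real.exp (c * y) / c) (Real.exp (c * x)) x := by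
  have h1 : HasDerivAt (fun y : ℝ => c * y) c x := by
    simpa using (hasDerivAt_id x).const_mul c
  have h2 := (Real.hasDerivAt_exp (c * x)).comp x h1
  have h3 := h2.div_const c
  simpa [mul_div_assoc, div_self hc] using h3

lemma integrableOn_expc {c : ℝ} (hc : 0 < c) (A : ℝ) :
    IntegrableOn (fun x => Real.exp (c * x)) (Set.Iic A) := by
  have hG : Integrable ((Set.Iic (c * A)).indicator Real.exp) :=
    (integrableOn_exp_Iic (c * A)).integrable_indicator measurableSet_Iic
  have h2 : Integrable (fun x => ((Set.Iic (c * A)).indicator Real.exp) (c * x)) :=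
    (MeasureTheory.integrable_comp_mul_left_iff _ hc.ne').2 hG
  have heq : (fun x => ((Set.Iic (c * A)).indicator Real.exp) (c * x))
      = (Set.Iic A).indicator (fun x => Real.exp (c * x)) := by
    funext x
    by_cases h : x ≤ A
    · rw [Set.indicator_of_mem (show c*x ∈ Set.Iic (c*A) from mul_le_mul_of_nonneg_left h hc.le), Set.indicator_of_mem (show x ∈ Set.Iic A from h)]
    · rw [Set.indicator_of_notMem (show x ∉ Set.Iic A from h),
        Set.indicator_of_notMem (show c*x ∉ Set.Iic (c*A) by
          simp only [Set.mem_Iic, not_le] at h ⊢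
          exact (mul_lt_mul_iff_right₀ hc).2 h)]
  rw [← integrable_indicator_iff measurableSet_Iic, ← heq]
  exact h2

lemma integral_expc {c : ℝ} (hc : 0 < c) (A : ℝ) :
    ∫ x in Set.Iic A, Real.exp (c * x) = Real.exp (c * A) / c := by
  have htend : Tendsto (fun x => Real.exp (c * x) / c) atBot (nhds (0 / c)) :=
    (Real.tendsto_exp_atBot.comp (tendsto_id.const_mul_atBot hc)).div_const c
  have := MeasureTheory.integral_Iic_of_hasDerivAt_of_tendsto'
    (fun x _ => hasDerivAt_expc hc.ne' x) (integrableOn_expc hc A) htend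
  simpa using this

lemma integral_expc_Ico {c : ℝ} (hc : 0 < c) {A B : ℝ} (hAB : A ≤ B) :
    ∫ x in Set.Ico A B, Real.exp (c * x) = (Real.exp (c * B) - Real.exp (c * A)) / c := by
  rw [MeasureTheory.integral_Ico_eq_integral_Ioo, ← MeasureTheory.integral_Ioc_eq_integral_Ioo,
    ← intervalIntegral.integral_of_le hAB]
  rw [intervalIntegral.integral_eq_sub_of_hasDerivAt (fun x _ => hasDerivAt_expc hc.ne' x)
    ((Real.continuous_exp.comp (continuous_const.mul continuous_id)).intervalIntegrable _ _)]
  ring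

set_option maxHeartbeats 1600000 in
theorem stmt_2 {n : ℕ} (W : Euc n → ℝ) (b a : Euc n) (c m M : ℝ) (hc : 0 < c)
    (hW : ContDiff ℝ 2 W) (hWb : W b = 0) (hgb : gradient W b = 0)
    (hHess : ∃ μ > 0, ∀ v : Euc n, μ * ‖v‖ ^ 2 ≤ ⟪(fderiv ℝ (gradient W) b) v, v⟫)
    (hDne : {v : Euc n | W v < 0}.Nonempty)
    (hDbd : IsBounded {v : Euc n | W v < 0})
    (ha : IsLeast (Set.range W) (W a)) (ham : m = -W a)
    (hM : IsGreatest ((fun t : ℝ => W (a + t • (b - a))) '' Set.Icc 0 1) M) :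
    gam W b c < (1 / c) * ((‖b - a‖ ^ 2 / 2 + M) * (Real.exp c - 1) - m * Real.exp (-c)) := by
  classical
  obtain ⟨v₀, hv₀⟩ := hDne
  have hWa : W a < 0 := lt_of_le_of_lt (ha.2 (Set.mem_range_self v₀)) hv₀
  have hm : 0 < m := by rw [ham]; linarith
  have hWam : W a = -m := by rw [ham]; ring
  have hWlb : ∀ v : Euc n, -m ≤ W v := fun v => by
    have := ha.2 (Set.mem_range_self v); rw [ham]; linarith
  set φ : ℝ → Euc n := fun t => a + t • (b - a) with hφ
  have hφ0 : φ 0 = a := by simp [hφ]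
  have hφ1 : φ 1 = b := by simp [hφ]
  have hφcont : Continuous φ := by fun_prop
  have hWcont : Continuous W := hW.continuous
  have hM0 : 0 ≤ M := by
    have h := hM.2 ⟨1, ⟨zero_le_one, le_refl 1⟩, rfl⟩
    simp only [one_smul] at h
    rw [show a + (b - a) = b by abel, hWb] at h
    exact h
  have hMub : ∀ t, t ∈ Set.Icc (0:ℝ) 1 → W (φ t) ≤ M := fun t ht => hM.2 ⟨t, ht, rfl⟩
  have hba : (0:ℝ) < ‖b - a‖ := by
    rw [norm_pos_iff, sub_ne_zero]
    intro h
    rw [← h, hWb] at hWa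
    exact lt_irrefl 0 hWa
  set K := ‖b - a‖ ^ 2 / 2 + M with hK
  have hKpos : 0 < K := by positivity
  -- the first touching parameter
  set S : Set ℝ := {t | t ∈ Set.Icc (0:ℝ) 1 ∧ W (φ t) < 0} with hS
  have hS0 : (0:ℝ) ∈ S := ⟨⟨le_refl 0, zero_le_one⟩, by rwa [hφ0]⟩
  have hSne : S.Nonempty := ⟨0, hS0⟩
  have hSbdd : BddAbove S := ⟨1, fun t ht => ht.1.2⟩
  set t₁ := sSup S with ht₁def
  have ht₁0 : 0 ≤ t₁ := le_csSup hSbdd hS0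
  have ht₁1 : t₁ ≤ 1 := csSup_le hSne fun t ht => ht.1.2
  have hle : W (φ t₁) ≤ 0 := by
    have h1 : t₁ ∈ closure S := csSup_mem_closure hSne hSbdd
    have h2 : closure S ⊆ {t : ℝ | W (φ t) ≤ 0} :=
      closure_minimal (fun t ht => le_of_lt ht.2)
        (isClosed_le (hWcont.comp hφcont) continuous_const)
    exact h2 h1
  have hge : 0 ≤ W (φ t₁) := by
    by_contra h
    push_neg at h
    have ht₁lt : t₁ < 1 := lt_of_le_of_ne ht₁1 (fun he => by
      rw [he, hφ1, hWb] at h; exact lt_irrefl 0 h)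
    have hopen : IsOpen {t : ℝ | W (φ t) < 0} :=
      isOpen_lt (hWcont.comp hφcont) continuous_const
    obtain ⟨ε, hε, hball⟩ := Metric.isOpen_iff.1 hopen t₁ h
    have h1 : t₁ ≤ min 1 (t₁ + ε/2) := le_min ht₁1 (by linarith)
    have h2 : min 1 (t₁ + ε/2) ≤ t₁ + ε/2 := min_le_right _ _
    have ht'S : min 1 (t₁ + ε/2) ∈ S := by
      refine ⟨⟨le_trans ht₁0 h1, min_le_left _ _⟩, ?_⟩
      apply hball
      rw [Metric.mem_ball, Real.dist_eq, abs_lt]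
      constructor <;> linarith
    have hle' := le_csSup hSbdd ht'S
    have : t₁ < min 1 (t₁ + ε/2) := lt_min ht₁lt (by linarith)
    linarith
  have hW0 : W (φ t₁) = 0 := le_antisymm hle hge
  have hseg : ∀ t, t₁ ≤ t → t ≤ 1 → 0 ≤ W (φ t) := by
    intro t h1 h2
    rcases eq_or_lt_of_le h1 with rfl | h1'
    · exact hge
    by_contra h
    push_neg at h
    have : t ∈ S := ⟨⟨le_trans ht₁0 h1, h2⟩, h⟩
    have := le_csSup hSbdd this
    linarith
  have hfront : φ t₁ ∈ frontier {v : Euc n | W v < 0} := by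
    have hopen : IsOpen {v : Euc n | W v < 0} := isOpen_lt hWcont continuous_const
    rw [hopen.frontier_eq]
    refine ⟨?_, ?_⟩
    · have h1 : t₁ ∈ closure S := csSup_mem_closure hSne hSbdd
      have h2 : φ t₁ ∈ closure (φ '' S) :=
        image_closure_subset_closure_image hφcont ⟨t₁, h1, rfl⟩
      refine closure_mono ?_ h2
      rintro _ ⟨t, ht, rfl⟩
      exact ht.2
    · simp [hW0]
  -- the test function
  set u : ℝ → Euc n := fun x => φ (max 0 (min (x + t₁) 1)) with hu
  have hucont : Continuous u := by
    apply hφcont.comp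
    exact (continuous_const.max ((continuous_id.add continuous_const).min continuous_const))
  have hu_left : ∀ x, x ≤ -t₁ → u x = a := by
    intro x hx
    have h1 : min (x + t₁) 1 = x + t₁ := min_eq_left (by linarith)
    have h2 : max 0 (x + t₁) = 0 := max_eq_left (by linarith)
    rw [hu]; simp only [h1, h2, hφ0]
  have hu_right : ∀ x, 1 - t₁ ≤ x → u x = b := by
    intro x hx
    have h1 : min (x + t₁) 1 = 1 := min_eq_right (by linarith)
    rw [hu]; simp only [h1, max_eq_right (zero_le_one), hφ1]
  have hu_mid : ∀ x, -t₁ ≤ x → x ≤ 1 - t₁ → u x = φ (x + t₁) := by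
    intro x h1 h2
    have hm1 : min (x + t₁) 1 = x + t₁ := min_eq_left (by linarith)
    have hm2 : max 0 (x + t₁) = x + t₁ := max_eq_right (by linarith)
    rw [hu]; simp only [hm1, hm2]
  have hu0 : u 0 = φ t₁ := by
    rw [hu_mid 0 (by linarith) (by linarith), zero_add]
  set g : ℝ → Euc n := (Set.Ico (-t₁) (1 - t₁)).indicator (fun _ => b - a) with hg
  have haffine : ∀ x : ℝ, HasDerivAt (fun s : ℝ => a + (s + t₁) • (b - a)) (b - a) x := by
    intro x
    have h1 : HasDerivAt (fun s : ℝ => s + t₁) 1 x := (hasDerivAt_id x).add_const t₁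
    have h2 := h1.smul_const (b - a)
    simpa using h2.const_add a
  have hgIco : ∀ x, x ∈ Set.Ico (-t₁) (1 - t₁) → g x = b - a := by
    intro x hx; rw [hg, Set.indicator_of_mem hx]
  have hgnot : ∀ x, x ∉ Set.Ico (-t₁) (1 - t₁) → g x = 0 := by
    intro x hx; rw [hg, Set.indicator_of_notMem hx]
  have hdR : ∀ x : ℝ, HasDerivWithinAt u (g x) (Set.Ioi x) x := by
    intro x
    rcases lt_or_ge x (-t₁) with hx | hx
    · rw [hgnot x (fun h => absurd h.1 (not_le.2 hx))]
      refine (hasDerivWithinAt_const x _ a).congr_of_eventuallyEq ?_ (hu_left x hx.le)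
      filter_upwards [Ioo_mem_nhdsGT_of_mem ⟨le_refl x, hx⟩] with y hy
      exact hu_left y hy.2.le
    rcases lt_or_ge x (1 - t₁) with hx2 | hx2
    · rw [hgIco x ⟨hx, hx2⟩]
      refine (haffine x).hasDerivWithinAt.congr_of_eventuallyEq ?_ (hu_mid x hx hx2.le)
      filter_upwards [Ioo_mem_nhdsGT_of_mem ⟨le_refl x, hx2⟩] with y hy
      exact hu_mid y (le_trans hx hy.1.le) hy.2.le
    · rw [hgnot x (fun h => absurd h.2 (not_lt.2 hx2))]
      refine (hasDerivWithinAt_const x _ b).congr_of_eventuallyEq ?_ (hu_right x hx2)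
      filter_upwards [self_mem_nhdsWithin] with y hy
      exact hu_right y (le_trans hx2 (le_of_lt hy))
  have hgmeas : AEStronglyMeasurable g volume :=
    (aestronglyMeasurable_const.indicator measurableSet_Ico)
  have hgint : Integrable g := by
    rw [hg, integrable_indicator_iff measurableSet_Ico]
    exact integrableOn_const measure_Ico_lt_top.ne
  have hFTCle : ∀ x y : ℝ, x ≤ y → (∫ t in x..y, g t) = u y - u x := by
    intro x y hxy
    exact intervalIntegral.integral_eq_sub_of_hasDeriv_right_of_le hxy hucont.continuousOn
      (fun t _ => hdR t) hgint.intervalIntegrable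
  have hFTC : ∀ x y : ℝ, u y - u x = ∫ t in x..y, g t := by
    intro x y
    rcases le_total x y with h | h
    · exact (hFTCle x y h).symm
    · rw [intervalIntegral.integral_symm, hFTCle y x h]
      abel
  have hgsq : (fun t => ‖g t‖ ^ 2)
      = (Set.Ico (-t₁) (1 - t₁)).indicator (fun _ => ‖b - a‖ ^ 2) := by
    funext t
    by_cases h : t ∈ Set.Ico (-t₁) (1 - t₁)
    · rw [hgIco t h, Set.indicator_of_mem h]
    · rw [hgnot t h, Set.indicator_of_notMem h, norm_zero]
      ring
  have hWu_ub : ∀ x : ℝ, W (u x) ≤ M := by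
    intro x
    apply hMub
    exact ⟨le_max_left 0 _, max_le zero_le_one (min_le_right _ _)⟩
  have hWu_pos : ∀ x : ℝ, 0 ≤ x → 0 ≤ W (u x) := by
    intro x hx
    apply hseg
    · exact le_trans (le_min (by linarith) ht₁1) (le_max_right _ _)
    · exact max_le zero_le_one (min_le_right _ _)
  have hAdm : u ∈ Adm W b := by
    refine ⟨⟨g, hgmeas, ?_, hFTC⟩, ?_, ?_, fun x hx => hWu_pos x hx⟩
    · rw [hgsq]
      exact ((integrable_indicator_iff measurableSet_Ico).2
        (integrableOn_const measure_Ico_lt_top.ne)).locallyIntegrable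
    · refine Tendsto.congr' ?_ tendsto_const_nhds
      filter_upwards [eventually_ge_atTop (1 - t₁)] with x hx
      exact (hu_right x hx).symm
    · rw [hu0]; exact hfront
  -- a.e. identification of the integrand
  set ftil : ℝ → ℝ := fun x => Real.exp (c * x) * (‖g x‖ ^ 2 / 2 + W (u x)) with hftil
  have hderiv_eq : ∀ x : ℝ, x ≠ -t₁ → x ≠ 1 - t₁ → deriv u x = g x := by
    intro x h1 h2
    rcases lt_trichotomy x (-t₁) with hx | hx | hx
    · rw [hgnot x (fun h => absurd h.1 (not_le.2 hx))]
      have heq : u =ᶠ[nhds x] (fun _ => a) := by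
        filter_upwards [Iio_mem_nhds hx] with y hy
        exact hu_left y (le_of_lt hy)
      rw [Filter.EventuallyEq.deriv_eq heq, deriv_const]
    · exact absurd hx h1
    rcases lt_trichotomy x (1 - t₁) with hx2 | hx2 | hx2
    · rw [hgIco x ⟨hx.le, hx2⟩]
      have heq : u =ᶠ[nhds x] (fun s => a + (s + t₁) • (b - a)) := by
        filter_upwards [Ioo_mem_nhds hx hx2] with y hy
        exact hu_mid y hy.1.le hy.2.le
      rw [Filter.EventuallyEq.deriv_eq heq, (haffine x).deriv]
    · exact absurd hx2 h2
    · rw [hgnot x (fun h => absurd h.2 (not_lt.2 hx2.le))]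
      have heq : u =ᶠ[nhds x] (fun _ => b) := by
        filter_upwards [Ioi_mem_nhds hx2] with y hy
        exact hu_right y (le_of_lt hy)
      rw [Filter.EventuallyEq.deriv_eq heq, deriv_const]
  have hJ : J W c u = ∫ x : ℝ, ftil x := by
    rw [J]
    apply integral_congr_ae
    have hsub : {x : ℝ | ¬ (Real.exp (c * x) * (‖deriv u x‖ ^ 2 / 2 + W (u x)) = ftil x)}
        ⊆ {-t₁, 1 - t₁} := by
      intro x hx
      by_contra hmem
      simp only [Set.mem_insert_iff, Set.mem_singleton_iff] at hmem
      push_neg at hmem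
      refine hx ?_
      simp only [hftil]
      rw [hderiv_eq x hmem.1 hmem.2]
    rw [Filter.EventuallyEq, ae_iff]
    exact measure_mono_null hsub
      ((Set.finite_singleton _ |>.insert _).measure_zero volume)
  -- integrability of ftil
  set C := ‖b - a‖ ^ 2 / 2 + max m M with hCdef
  have hC0 : 0 ≤ C := add_nonneg (by positivity) (le_trans hM0 (le_max_right m M))
  have hftil_zero : ∀ x, 1 - t₁ ≤ x → ftil x = 0 := by
    intro x hx
    simp only [hftil]
    rw [hgnot x (fun h => absurd h.2 (not_lt.2 hx)), hu_right x hx, hWb, norm_zero]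
    ring
  have hftil_bound : ∀ x : ℝ,
      ‖ftil x‖ ≤ C * ((Set.Iic (1 - t₁)).indicator (fun x => Real.exp (c * x)) x) := by
    intro x
    rcases le_or_gt x (1 - t₁) with hx | hx
    · rw [Set.indicator_of_mem (show x ∈ Set.Iic (1 - t₁) from hx)]
      have hz : |‖g x‖ ^ 2 / 2 + W (u x)| ≤ C := by
        rw [abs_le]
        constructor
        · have h1 := hWlb (u x)
          have h2 : m ≤ max m M := le_max_left m M
          nlinarith [sq_nonneg ‖g x‖, sq_nonneg ‖b - a‖]
        · have h1 : ‖g x‖ ≤ ‖b - a‖ := by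
            by_cases hmem : x ∈ Set.Ico (-t₁) (1 - t₁)
            · rw [hgIco x hmem]
            · rw [hgnot x hmem, norm_zero]
              exact norm_nonneg _
          have h2 := hWu_ub x
          have h3 : M ≤ max m M := le_max_right m M
          nlinarith [norm_nonneg (g x), norm_nonneg (b - a)]
      have heq : ‖ftil x‖ = Real.exp (c * x) * |‖g x‖ ^ 2 / 2 + W (u x)| := by
        simp only [hftil, Real.norm_eq_abs, abs_mul, abs_of_pos (Real.exp_pos (c * x))]
      rw [heq, mul_comm C _]
      exact mul_le_mul_of_nonneg_left hz (Real.exp_pos _).le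
    · rw [Set.indicator_of_notMem (show x ∉ Set.Iic (1 - t₁) from not_le.2 hx)]
      rw [hftil_zero x hx.le]
      simp
  have hftil_meas : AEStronglyMeasurable ftil volume := by
    apply AEStronglyMeasurable.mul
    · exact (show Continuous fun x : ℝ => Real.exp (c * x) by fun_prop).aestronglyMeasurable
    · apply AEStronglyMeasurable.add
      · have : AEStronglyMeasurable (fun t => ‖g t‖ ^ 2) volume := by
          rw [hgsq]
          exact aestronglyMeasurable_const.indicator measurableSet_Ico
        simpa [div_eq_mul_inv] using this.mul_const (2⁻¹ : ℝ)
      · exact (hWcont.comp hucont).aestronglyMeasurable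
  have hdom : Integrable
      (fun x => C * ((Set.Iic (1 - t₁)).indicator (fun x => Real.exp (c * x)) x)) :=
    (((integrableOn_expc hc (1 - t₁)).integrable_indicator measurableSet_Iic)).const_mul C
  have hftil_int : Integrable ftil :=
    Integrable.mono' hdom hftil_meas (Filter.Eventually.of_forall hftil_bound)
  -- the dominating function F
  set F : ℝ → ℝ := fun x => (Set.Iio (-t₁)).indicator (fun x => -m * Real.exp (c * x)) x
      + (Set.Ico (-t₁) (1 - t₁)).indicator (fun x => K * Real.exp (c * x)) x with hF
  have hF1int : Integrable ((Set.Iio (-t₁)).indicator (fun x => -m * Real.exp (c * x))) := by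
    apply IntegrableOn.integrable_indicator _ measurableSet_Iio
    exact (((integrableOn_expc hc (-t₁)).mono_set Iio_subset_Iic_self).const_mul (-m))
  have hF2int : Integrable ((Set.Ico (-t₁) (1 - t₁)).indicator (fun x => K * Real.exp (c * x))) := by
    apply IntegrableOn.integrable_indicator _ measurableSet_Ico
    exact ((show Continuous fun x : ℝ => K * Real.exp (c * x) by fun_prop).integrableOn_Icc.mono_set
      Set.Ico_subset_Icc_self)
  have hFint : Integrable F := hF1int.add hF2int
  have hle_ptw : ∀ x : ℝ, ftil x ≤ F x := by
    intro x
    rcases lt_or_ge x (-t₁) with hx | hx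
    · simp only [hF, hftil]
      rw [Set.indicator_of_mem (show x ∈ Set.Iio (-t₁) from hx),
        Set.indicator_of_notMem (fun h : x ∈ Set.Ico (-t₁) (1-t₁) => absurd h.1 (not_le.2 hx)),
        hgnot x (fun h => absurd h.1 (not_le.2 hx)), hu_left x hx.le, hWam, norm_zero]
      ring_nf
      exact le_refl _
    rcases lt_or_ge x (1 - t₁) with hx2 | hx2
    · simp only [hF, hftil]
      rw [Set.indicator_of_notMem (show x ∉ Set.Iio (-t₁) from not_lt.2 hx),
        Set.indicator_of_mem (show x ∈ Set.Ico (-t₁) (1-t₁) from ⟨hx, hx2⟩),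
        hgIco x ⟨hx, hx2⟩]
      have h2 := hWu_ub x
      have h3 := Real.exp_pos (c * x)
      rw [hK]
      nlinarith
    · simp only [hF]
      rw [Set.indicator_of_notMem (show x ∉ Set.Iio (-t₁) by
          simp only [Set.mem_Iio, not_lt]; linarith),
        Set.indicator_of_notMem (fun h : x ∈ Set.Ico (-t₁) (1-t₁) => absurd h.2 (not_lt.2 hx2)),
        hftil_zero x hx2]
      norm_num
  have hFval : ∫ x : ℝ, F x
      = -m * (Real.exp (c * (-t₁)) / c)
        + K * ((Real.exp (c * (1 - t₁)) - Real.exp (c * (-t₁))) / c) := by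
    rw [hF]
    rw [integral_add hF1int hF2int]
    rw [integral_indicator measurableSet_Iio, integral_indicator measurableSet_Ico]
    rw [MeasureTheory.integral_const_mul, MeasureTheory.integral_const_mul]
    rw [← MeasureTheory.integral_Iic_eq_integral_Iio, integral_expc hc,
      integral_expc_Ico hc (by linarith)]
  have hJle : J W c u ≤ -m * (Real.exp (c * (-t₁)) / c)
      + K * ((Real.exp (c * (1 - t₁)) - Real.exp (c * (-t₁))) / c) := by
    rw [hJ, ← hFval]
    exact integral_mono hftil_int hFint hle_ptw
  -- arithmetic
  have harith : -m * (Real.exp (c * (-t₁)) / c)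
      + K * ((Real.exp (c * (1 - t₁)) - Real.exp (c * (-t₁))) / c)
      < (1 / c) * (K * (Real.exp c - 1) - m * Real.exp (-c)) := by
    obtain ⟨s, hsdef⟩ : ∃ s, s = Real.exp (c * (-t₁)) := ⟨_, rfl⟩
    have hspos : 0 < s := hsdef ▸ Real.exp_pos _
    have hs1 : s ≤ 1 := by
      rw [hsdef, ← Real.exp_zero]
      exact Real.exp_le_exp.2 (by nlinarith)
    have hs2 : Real.exp (-c) ≤ s := by
      rw [hsdef]
      exact Real.exp_le_exp.2 (by nlinarith)
    have hs3 : Real.exp (-c) < 1 := Real.exp_lt_one_iff.2 (by linarith)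
    have hec : 1 < Real.exp c := by nlinarith [Real.add_one_le_exp c]
    have hE : 0 < K * (Real.exp c - 1) := mul_pos hKpos (by linarith)
    have hsplit : Real.exp (c * (1 - t₁)) = Real.exp c * s := by
      rw [hsdef, ← Real.exp_add]
      ring_nf
    have key : K * (Real.exp c - 1) * s - m * s
        < K * (Real.exp c - 1) - m * Real.exp (-c) := by
      rcases lt_or_eq_of_le hs1 with hs | hs
      · have h1 : K * (Real.exp c - 1) * s < K * (Real.exp c - 1) * 1 :=
          mul_lt_mul_of_pos_left hs hE
        have h2 : m * Real.exp (-c) ≤ m * s := mul_le_mul_of_nonneg_left hs2 hm.le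
        linarith
      · subst hs
        have h2 : m * Real.exp (-c) < m * 1 := mul_lt_mul_of_pos_left hs3 hm
        linarith [mul_one m, mul_one (K * (Real.exp c - 1))]
    rw [hsplit, ← hsdef]
    have hlhs : -m * (s / c) + K * ((Real.exp c * s - s) / c)
        = (1 / c) * (K * (Real.exp c - 1) * s - m * s) := by ring
    rw [hlhs]
    exact mul_lt_mul_of_pos_left key (by positivity)
  -- lower bound for the infimum
  have hbdd : BddBelow (J W c '' Adm W b) := by
    refine ⟨-m / c, ?_⟩
    rintro y ⟨u', hu', rfl⟩
    obtain ⟨-, -, -, hWpos⟩ := hu'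
    by_cases hint : Integrable (fun x => Real.exp (c * x) * (‖deriv u' x‖ ^ 2 / 2 + W (u' x)))
    · set L : ℝ → ℝ := (Set.Iio (0:ℝ)).indicator (fun x => -m * Real.exp (c * x)) with hL
      have hLint : Integrable L := by
        apply IntegrableOn.integrable_indicator _ measurableSet_Iio
        exact (((integrableOn_expc hc 0).mono_set Iio_subset_Iic_self).const_mul (-m))
      have hLle : ∀ x, L x ≤ Real.exp (c * x) * (‖deriv u' x‖ ^ 2 / 2 + W (u' x)) := by
        intro x
        rcases lt_or_ge x 0 with hx | hx
        · rw [hL, Set.indicator_of_mem (show x ∈ Set.Iio (0:ℝ) from hx)]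
          have h1 := hWlb (u' x)
          have h2 := Real.exp_pos (c * x)
          nlinarith [sq_nonneg ‖deriv u' x‖]
        · rw [hL, Set.indicator_of_notMem (show x ∉ Set.Iio (0:ℝ) from not_lt.2 hx)]
          have h1 := hWpos x hx
          have h2 := Real.exp_pos (c * x)
          nlinarith [sq_nonneg ‖deriv u' x‖]
      have hLval : ∫ x : ℝ, L x = -m / c := by
        rw [hL, integral_indicator measurableSet_Iio, MeasureTheory.integral_const_mul,
          ← MeasureTheory.integral_Iic_eq_integral_Iio, integral_expc hc]
        rw [mul_zero, Real.exp_zero]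
        ring
      have := integral_mono hLint hint hLle
      rw [hLval] at this
      rw [J]
      exact this
    · rw [J, integral_undef hint]
      have h9 : -m / c < 0 := div_neg_of_neg_of_pos (by linarith) hc
      linarith
  have hmem : J W c u ∈ J W c '' Adm W b := ⟨u, hAdm, rfl⟩
  have hinf : gam W b c ≤ J W c u := csInf_le hbdd hmem
  calc gam W b c ≤ J W c u := hinf
    _ ≤ _ := hJle
    _ < (1 / c) * (K * (Real.exp c - 1) - m * Real.exp (-c)) := harith
    _ = (1 / c) * ((‖b - a‖ ^ 2 / 2 + M) * (Real.exp c - 1) - m * Real.exp (-c)) := by rw [hK]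
end
end

section
/- Let c > 0, m > 0, d > 0, M ≥ 0, and K = |b-a|²/2 + M. If γ : (0,∞) → ℝ satisfies c d²/2 - m/c ≤ γ(c) ≤ (1/c)(K(e^c - 1) - m e^{-c}) for all c > 0, then any root c* of γ(c*) = 0 satisfies ln((1 + √(1 + 8m/(2K)))/2) < c* ≤ √(2m)/d. -/
open Real Filter MeasureTheory Set Metric Bornology
open scoped RealInnerProductSpace NNReal

noncomputable section

theorem stmt_3 {n : ℕ} (a b : Euc n) (m d M K : ℝ) (γ : ℝ → ℝ)
    (hm : 0 < m) (hd : 0 < d) (hM : 0 ≤ M) (hK : K = ‖b - a‖ ^ 2 / 2 + M)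
    (hbound : ∀ c : ℝ, 0 < c →
      c * d ^ 2 / 2 - m / c ≤ γ c ∧
      γ c < (1 / c) * (K * (Real.exp c - 1) - m * Real.exp (-c)))
    (cstar : ℝ) (hcs : 0 < cstar) (hroot : γ cstar = 0) :
    Real.log ((1 + Real.sqrt (1 + 8 * m / (2 * K))) / 2) < cstar ∧
      cstar ≤ Real.sqrt (2 * m) / d := by
  obtain ⟨h1, h2⟩ := hbound cstar hcs
  rw [hroot] at h1 h2
  set t := Real.exp cstar with ht
  have ht1 : 1 < t := Real.one_lt_exp_iff.mpr hcs
  have ht0 : 0 < t := lt_trans one_pos ht1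
  -- upper bound part
  have hpos : 0 < K * (t - 1) - m * Real.exp (-cstar) := by
    by_contra h
    push_neg at h
    have : (1 / cstar) * (K * (t - 1) - m * Real.exp (-cstar)) ≤ 0 :=
      mul_nonpos_of_nonneg_of_nonpos (by positivity) h
    linarith
  have hexp : Real.exp (-cstar) = 1 / t := by
    rw [Real.exp_neg]; field_simp; exact ht
  have hKt : m / t < K * (t - 1) := by
    rw [hexp] at hpos; rw [div_eq_mul_one_div]; linarith
  have hK0 : 0 < K := by
    have : 0 < m / t := by positivity
    have h' : 0 < K * (t - 1) := lt_trans this hKt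
    nlinarith
  have hmKt : m < K * (t - 1) * t := by
    have := (div_lt_iff₀ ht0).mp hKt
    linarith
  have hq : 8 * m / (2 * K) = 4 * m / K := by ring
  constructor
  · rw [hq]
    have hs : Real.sqrt (1 + 4 * m / K) < 2 * t - 1 := by
      rw [Real.sqrt_lt' (by linarith)]
      have : 4 * m / K < 4 * (t - 1) * t := by
        rw [div_lt_iff₀ hK0]; nlinarith
      nlinarith
    have hlt : (1 + Real.sqrt (1 + 4 * m / K)) / 2 < t := by linarith
    have hp : 0 < (1 + Real.sqrt (1 + 4 * m / K)) / 2 := by positivity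
    calc Real.log ((1 + Real.sqrt (1 + 4 * m / K)) / 2)
        < Real.log t := Real.log_lt_log hp hlt
      _ = cstar := Real.log_exp cstar
  · have hsq : (cstar * d) ^ 2 ≤ 2 * m := by
      have : cstar * (cstar * d ^ 2 / 2 - m / cstar) ≤ 0 :=
        mul_nonpos_of_nonneg_of_nonpos hcs.le h1
      have hmc : cstar * (m / cstar) = m := by field_simp
      nlinarith
    rw [le_div_iff₀ hd]
    exact Real.le_sqrt_of_sq_le hsq
end
end

section
/- Let u be a C² solution of c u' + u'' = DW(u) on (0,∞) with ½|u'(x)|² - W(u(x)) and |u'(x)|² decaying like O(e^{-2λx}) for some λ > c. Then integrating the identity ((½|u'|²-W(u))e^{ax})' + ((2c-a)/2 |u'|² + aW(u))e^{ax} = 0 over (0,∞) for a ∈ (0,2c) yields ∫₀^∞ ((2c-a)/(2a)|u'|² + W(u)) e^{ax} dx = |u'(0+)|²/(2a). In particular, taking a = c: ∫₀^∞ (½|u'|² + W(u)) e^{cx} dx = |u'(0+)|²/(2c). -/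
open Real Filter MeasureTheory Set Metric Bornology
open scoped RealInnerProductSpace NNReal

noncomputable section

theorem stmt_14 {n : ℕ} (W : Euc n → ℝ) (hW : ContDiff ℝ 1 W) (c : ℝ) (hc : 0 < c)
    (u u' u'' : ℝ → Euc n)
    (hu : ∀ x, HasDerivAt u (u' x) x) (hcont : Continuous u')
    (hu' : ∀ x ∈ Set.Ioi (0 : ℝ), HasDerivAt u' (u'' x) x)
    (hODE : ∀ x ∈ Set.Ioi (0 : ℝ), c • u' x + u'' x = gradient W (u x))
    (hW0 : W (u 0) = 0)
    (hdecay : ∃ lam > c, ∃ C : ℝ, ∀ x ≥ (0 : ℝ),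
      ‖u' x‖ ^ 2 + |W (u x)| + |‖u' x‖ ^ 2 / 2 - W (u x)| ≤ C * Real.exp (-2 * lam * x)) :
    (∀ a : ℝ, 0 < a → a < 2 * c →
      ∫ x in Set.Ioi (0 : ℝ),
        ((2 * c - a) / (2 * a) * ‖u' x‖ ^ 2 + W (u x)) * Real.exp (a * x)
        = ‖u' 0‖ ^ 2 / (2 * a)) ∧
    ∫ x in Set.Ioi (0 : ℝ), (‖u' x‖ ^ 2 / 2 + W (u x)) * Real.exp (c * x)
      = ‖u' 0‖ ^ 2 / (2 * c) := by
  obtain ⟨lam, hlam, C, hC⟩ := hdecay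
  have hC0 : 0 ≤ C := by
    have h0 := hC 0 le_rfl
    simp only [mul_zero, Real.exp_zero, mul_one] at h0
    have : (0:ℝ) ≤ ‖u' 0‖ ^ 2 + |W (u 0)| + |‖u' 0‖ ^ 2 / 2 - W (u 0)| := by positivity
    linarith
  have hWc : Continuous W := hW.continuous
  have hucont : Continuous u := by
    rw [continuous_iff_continuousAt]; exact fun x => (hu x).continuousAt
  -- the key identity with a-weight before division by a
  have key : ∀ a : ℝ, 0 < a → a < 2 * c →
      IntegrableOn (fun x => ((2*c-a)/2 * ‖u' x‖^2 + a * W (u x)) * Real.exp (a*x)) (Ioi 0) ∧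
      ∫ x in Ioi (0:ℝ), ((2*c-a)/2 * ‖u' x‖^2 + a * W (u x)) * Real.exp (a*x)
        = ‖u' 0‖^2 / 2 := by
    intro a ha ha2
    have halam : a < 2 * lam := by linarith
    set E : ℝ → ℝ := fun x => (‖u' x‖^2/2 - W (u x)) * Real.exp (a*x) with hE
    set F : ℝ → ℝ := fun x => -(((2*c-a)/2 * ‖u' x‖^2 + a * W (u x)) * Real.exp (a*x)) with hF
    -- derivative of E is F on Ioi 0
    have hderiv : ∀ x ∈ Ioi (0:ℝ), HasDerivAt E (F x) x := by
      intro x hx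
      have h1 : HasDerivAt (fun t => ‖u' t‖^2)
          (⟪u' x, u'' x⟫ + ⟪u'' x, u' x⟫) x := by
        have := HasDerivAt.inner (𝕜 := ℝ) (hu' x hx) (hu' x hx)
        simpa only [real_inner_self_eq_norm_sq] using this
      have hgrad : HasGradientAt W (gradient W (u x)) (u x) :=
        ((hW.differentiable one_ne_zero) (u x)).hasGradientAt
      have h2 : HasDerivAt (fun t => W (u t)) ⟪gradient W (u x), u' x⟫ x := by
        have := (hasGradientAt_iff_hasFDerivAt.mp hgrad).comp_hasDerivAt x (hu x)
        simp only [InnerProductSpace.toDual_apply_apply] at this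
        exact this
      have h3 : HasDerivAt (fun t => Real.exp (a*t)) (Real.exp (a*x) * a) x := by
        simpa using ((hasDerivAt_id x).const_mul a).exp
      have h4 := ((h1.div_const 2).sub h2).mul h3
      have hip : ⟪gradient W (u x), u' x⟫ = c * ‖u' x‖^2 + ⟪u'' x, u' x⟫ := by
        rw [← hODE x hx, inner_add_left, real_inner_smul_left, real_inner_self_eq_norm_sq]
      have hsym : ⟪u' x, u'' x⟫ = ⟪u'' x, u' x⟫ := real_inner_comm _ _
      convert h4 using 1
      · rfl
      · rfl
      · rfl
      rw [hip, hsym]; simp only [hF, Pi.sub_apply]; ring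
    -- integrability of F
    have hWu : Continuous (fun x => W (u x)) := hWc.comp hucont
    have hn : Continuous (fun x => ‖u' x‖^2) := (hcont.norm).pow 2
    have hexpC : Continuous (fun x => Real.exp (a*x)) :=
      Real.continuous_exp.comp (continuous_const.mul continuous_id)
    have hFcont : Continuous F :=
      (((continuous_const.mul hn).add (continuous_const.mul hWu)).mul hexpC).neg
    have hFint : IntegrableOn F (Ioi 0) := by
      have hbd : IntegrableOn (fun x => ((2*c-a)/2 + a) * C * Real.exp (-(2*lam - a) * x))
          (Ioi (0:ℝ)) := by
        exact (exp_neg_integrableOn_Ioi 0 (by linarith)).const_mul _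
      refine Integrable.mono' hbd hFcont.aestronglyMeasurable ?_
      rw [ae_restrict_iff' measurableSet_Ioi]
      filter_upwards with x hx
      have hxpos : (0:ℝ) < x := hx
      have hdx := hC x hxpos.le
      have hn1 : ‖u' x‖^2 ≤ C * Real.exp (-2 * lam * x) := by
        have : (0:ℝ) ≤ |W (u x)| + |‖u' x‖ ^ 2 / 2 - W (u x)| := by positivity
        linarith
      have hn2 : |W (u x)| ≤ C * Real.exp (-2 * lam * x) := by
        have h1 : (0:ℝ) ≤ ‖u' x‖^2 := by positivity
        have h2 : (0:ℝ) ≤ |‖u' x‖ ^ 2 / 2 - W (u x)| := abs_nonneg _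
        linarith
      have hexp : Real.exp (-2 * lam * x) * Real.exp (a * x)
          = Real.exp (-(2*lam - a) * x) := by
        rw [← Real.exp_add]; ring_nf
      have hFabs : ‖F x‖ ≤ ((2*c-a)/2 * ‖u' x‖^2 + a * |W (u x)|) * Real.exp (a*x) := by
        rw [hF]
        rw [norm_neg, Real.norm_eq_abs, abs_mul, abs_of_pos (Real.exp_pos _)]
        gcongr
        calc |(2*c-a)/2 * ‖u' x‖^2 + a * W (u x)|
            ≤ |(2*c-a)/2 * ‖u' x‖^2| + |a * W (u x)| := abs_add_le _ _
          _ = (2*c-a)/2 * ‖u' x‖^2 + a * |W (u x)| := by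
              rw [abs_mul, abs_mul, abs_of_pos ha,
                abs_of_nonneg (by linarith : (0:ℝ) ≤ (2*c-a)/2),
                abs_of_nonneg (by positivity : (0:ℝ) ≤ ‖u' x‖^2)]
      refine hFabs.trans ?_
      calc ((2*c-a)/2 * ‖u' x‖^2 + a * |W (u x)|) * Real.exp (a*x)
          ≤ ((2*c-a)/2 * (C * Real.exp (-2*lam*x)) + a * (C * Real.exp (-2*lam*x)))
              * Real.exp (a*x) := by
            refine mul_le_mul_of_nonneg_right ?_ (Real.exp_pos _).le
            exact add_le_add (mul_le_mul_of_nonneg_left hn1 (by linarith))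
              (mul_le_mul_of_nonneg_left hn2 ha.le)
        _ = ((2*c-a)/2 + a) * C * (Real.exp (-2*lam*x) * Real.exp (a*x)) := by ring
        _ = ((2*c-a)/2 + a) * C * Real.exp (-(2*lam - a) * x) := by rw [hexp]
    -- E tends to 0
    have hEtend : Tendsto E atTop (nhds 0) := by
      refine squeeze_zero_norm' (a := fun x => C * Real.exp (-(2*lam - a) * x)) ?_ ?_
      · filter_upwards [Filter.eventually_ge_atTop (0:ℝ)] with x hx
        have hdx := hC x hx
        have hn3 : |‖u' x‖ ^ 2 / 2 - W (u x)| ≤ C * Real.exp (-2 * lam * x) := by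
          have h1 : (0:ℝ) ≤ ‖u' x‖^2 := by positivity
          have h2 : (0:ℝ) ≤ |W (u x)| := abs_nonneg _
          linarith
        have hexp : Real.exp (-2 * lam * x) * Real.exp (a * x)
            = Real.exp (-(2*lam - a) * x) := by
          rw [← Real.exp_add]; ring_nf
        rw [hE]
        calc ‖(‖u' x‖^2/2 - W (u x)) * Real.exp (a*x)‖
            = |‖u' x‖^2/2 - W (u x)| * Real.exp (a*x) := by
              rw [Real.norm_eq_abs, abs_mul, abs_of_pos (Real.exp_pos _)]
          _ ≤ (C * Real.exp (-2*lam*x)) * Real.exp (a*x) := by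
              gcongr
          _ = C * Real.exp (-(2*lam - a) * x) := by rw [mul_assoc, hexp]
      · have : Tendsto (fun x : ℝ => -(2*lam - a) * x) atTop atBot := by
          apply Tendsto.const_mul_atTop_of_neg (by linarith) tendsto_id
        simpa using (Real.tendsto_exp_atBot.comp this).const_mul C
    have hEcont : ContinuousWithinAt E (Ici 0) 0 :=
      (((hn.div_const 2).sub hWu).mul hexpC).continuousWithinAt
    have hint := integral_Ioi_of_hasDerivAt_of_tendsto hEcont hderiv hFint hEtend
    have hE0 : E 0 = ‖u' 0‖^2 / 2 := by
      simp [hE, hW0]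
    rw [hE0] at hint
    constructor
    · refine hFint.neg.congr ?_
      filter_upwards with x
      simp [hF]
    · have : ∫ x in Ioi (0:ℝ), F x
          = - ∫ x in Ioi (0:ℝ), ((2*c-a)/2 * ‖u' x‖^2 + a * W (u x)) * Real.exp (a*x) := by
        rw [hF]; exact integral_neg _
      rw [this] at hint
      linarith
  have main : ∀ a : ℝ, 0 < a → a < 2 * c →
      ∫ x in Ioi (0:ℝ), ((2*c-a)/(2*a) * ‖u' x‖^2 + W (u x)) * Real.exp (a*x)
        = ‖u' 0‖^2 / (2*a) := by
    intro a ha ha2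
    obtain ⟨hint, heq⟩ := key a ha ha2
    have hfun : ∀ x : ℝ, ((2*c-a)/(2*a) * ‖u' x‖^2 + W (u x)) * Real.exp (a*x)
        = a⁻¹ * (((2*c-a)/2 * ‖u' x‖^2 + a * W (u x)) * Real.exp (a*x)) := by
      intro x
      have ha' : a ≠ 0 := ne_of_gt ha
      field_simp
    simp_rw [hfun]
    rw [MeasureTheory.integral_const_mul, heq, inv_mul_eq_div, div_div]
  refine ⟨main, ?_⟩
  have h2 := main c hc (by linarith)
  have hfun : ∀ x : ℝ, (‖u' x‖^2/2 + W (u x)) * Real.exp (c*x)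
      = ((2*c-c)/(2*c) * ‖u' x‖^2 + W (u x)) * Real.exp (c*x) := by
    intro x
    have : (2*c-c)/(2*c) = 1/2 := by
      field_simp; ring
    rw [this]; ring
  simp_rw [hfun]
  exact h2
end
end
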